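/- Let p, q, r, s be integers with p·r + q·s = 1, and let M, N be unit quaternions with M^p · N^q = 1. Suppose Re(M^{s+p} · N^{q−r}) = 0 and Re(N^{−r} · M^{s}) = 0, and that the two quaternions M^{s+p}·N^{q−r} and N^{−r}·M^{s} commute. Then M·N = N·M. (This is the statement that for the (p,q) torus knot the restriction to the pillowcase takes every non-abelian traceless representation to a non-abelian point: if the restriction of a traceless representation of the torus knot group to the four-punctured sphere is abelian, the representation itself is abelian.) -/

import Mathlib

open Quaternion

noncomputable section

/-- A unit traceless quaternion squares to `-1`. -/
lemma sq_eq_neg_one_of_traceless (a : ℍ[ℝ]) (hn : ‖a‖ = 1) (hr : a.re = 0) :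
    a * a = -1 := by
  have hstar : star a = -a := by
    ext <;> simp [hr]
  have h1 : a * star a = ((normSq a : ℝ) : ℍ[ℝ]) := Quaternion.self_mul_star a
  have h2 : normSq a = 1 := by
    rw [Quaternion.normSq_eq_norm_mul_self, hn, one_mul]
  rw [hstar, mul_neg, h2] at h1
  have h3 : -(a * a) = 1 := by rw [h1]; norm_num
  exact neg_eq_iff_eq_neg.mp h3

lemma re_mul_comm (a b : ℍ[ℝ]) : (a * b).re = (b * a).re := by
  simp only [Quaternion.re_mul]; ring

theorem torus_knot_abelian_image (p q r s : ℤ) (hpqrs : p * r + q * s = 1)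
    (M N : ℍ[ℝ]) (hMnorm : ‖M‖ = 1) (hNnorm : ‖N‖ = 1)
    (hMN : M ^ p * N ^ q = 1)
    (h1 : (M ^ (s + p) * N ^ (q - r)).re = 0)
    (h2 : (N ^ (-r) * M ^ s).re = 0)
    (hcomm : (M ^ (s + p) * N ^ (q - r)) * (N ^ (-r) * M ^ s)
      = (N ^ (-r) * M ^ s) * (M ^ (s + p) * N ^ (q - r))) :
    M * N = N * M := by
  have hM0 : M ≠ 0 := by intro h; rw [h] at hMnorm; simp at hMnorm
  have hN0 : N ≠ 0 := by intro h; rw [h] at hNnorm; simp at hNnorm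
  have hq : N ^ q = M ^ (-p) := by
    rw [zpow_neg]
    exact (inv_eq_of_mul_eq_one_right hMN).symm
  have hA : M ^ (s + p) * N ^ (q - r) = M ^ s * N ^ (-r) := by
    rw [zpow_add₀ hM0, sub_eq_add_neg, zpow_add₀ hN0]
    calc M ^ s * M ^ p * (N ^ q * N ^ (-r))
        = M ^ s * (M ^ p * N ^ q) * N ^ (-r) := by simp only [mul_assoc]
      _ = M ^ s * N ^ (-r) := by rw [hMN, mul_one]
  set X := M ^ s with hX
  set Y := N ^ (-r) with hY
  rw [hA] at h1 hcomm
  have hXn : ‖X‖ = 1 := by rw [hX, norm_zpow, hMnorm, one_zpow]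
  have hYn : ‖Y‖ = 1 := by rw [hY, norm_zpow, hNnorm, one_zpow]
  have hu : (X * Y) * (X * Y) = -1 :=
    sq_eq_neg_one_of_traceless _ (by rw [norm_mul, hXn, hYn, one_mul]) h1
  have hv : (Y * X) * (Y * X) = -1 :=
    sq_eq_neg_one_of_traceless _ (by rw [norm_mul, hXn, hYn, one_mul]) h2
  have huv : ((X * Y) * (Y * X)) * ((X * Y) * (Y * X)) = 1 := by
    calc ((X * Y) * (Y * X)) * ((X * Y) * (Y * X))
        = (X * Y) * (((Y * X) * (X * Y)) * (Y * X)) := by simp only [mul_assoc]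
      _ = (X * Y) * (((X * Y) * (Y * X)) * (Y * X)) := by rw [hcomm]
      _ = ((X * Y) * (X * Y)) * ((Y * X) * (Y * X)) := by simp only [mul_assoc]
      _ = 1 := by rw [hu, hv]; norm_num
  have hXY0 : X * Y ≠ 0 := by
    intro h; rw [h] at hu; simp at hu
  rcases mul_self_eq_one_iff.mp huv with hcase | hcase
  · -- uv = 1 : Y*X = -(X*Y), the anticommuting case, contradiction
    exfalso
    have hvu : Y * X = -(X * Y) := by
      have h3 : (X * Y) * (Y * X) = (X * Y) * (-(X * Y)) := by
        rw [hcase, mul_neg, hu]; norm_num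
      exact mul_left_cancel₀ hXY0 h3
    have hY0' : Y ≠ 0 := zpow_ne_zero _ hN0
    have hX0' : X ≠ 0 := zpow_ne_zero _ hM0
    have hreX : X.re = 0 := by
      have h4 : (Y * X * Y⁻¹).re = (-X).re := by
        rw [hvu]
        congr 1
        rw [neg_mul, mul_assoc, mul_inv_cancel₀ hY0', mul_one]
      rw [re_mul_comm (Y * X) Y⁻¹, ← mul_assoc, inv_mul_cancel₀ hY0', one_mul] at h4
      simp only [Quaternion.re_neg] at h4
      linarith
    have hreY : Y.re = 0 := by
      have hvu' : X * Y = -(Y * X) := by rw [hvu, neg_neg]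
      have h4 : (X * Y * X⁻¹).re = (-Y).re := by
        rw [hvu']
        congr 1
        rw [neg_mul, mul_assoc, mul_inv_cancel₀ hX0', mul_one]
      rw [re_mul_comm (X * Y) X⁻¹, ← mul_assoc, inv_mul_cancel₀ hX0', one_mul] at h4
      simp only [Quaternion.re_neg] at h4
      linarith
    have hX2 : M ^ (2 * s) = -1 := by
      rw [two_mul, zpow_add₀ hM0]
      exact sq_eq_neg_one_of_traceless X hXn hreX
    have hY2 : N ^ (2 * r) = -1 := by
      have h4 : N ^ (-(2 * r)) = -1 := by
        rw [show -(2*r) = -r + -r by ring, zpow_add₀ hN0]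
        exact sq_eq_neg_one_of_traceless Y hYn hreY
      rw [zpow_neg] at h4
      rw [← inv_inv (N ^ (2*r)), h4]
      norm_num
    have hkey1 : N ^ (2 * (q * s)) = (-1 : ℍ[ℝ]) ^ p := by
      calc N ^ (2 * (q * s)) = (N ^ q) ^ (2 * s) := by
            rw [show 2 * (q * s) = q * (2 * s) by ring, zpow_mul]
        _ = (M ^ (-p)) ^ (2 * s) := by rw [hq]
        _ = (M ^ (2 * s)) ^ (-p) := by
            rw [← zpow_mul, show -p * (2 * s) = 2 * s * -p by ring, zpow_mul]
        _ = ((-1 : ℍ[ℝ])) ^ (-p) := by rw [hX2]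
        _ = ((-1 : ℍ[ℝ])⁻¹) ^ p := by rw [inv_zpow, zpow_neg]
        _ = (-1 : ℍ[ℝ]) ^ p := by norm_num
    have hkey2 : N ^ (2 * (q * s)) = N ^ (2 : ℤ) * (-1 : ℍ[ℝ]) ^ p := by
      have he : 2 * (q * s) = 2 + (2 * r) * (-p) := by linarith [hpqrs]
      calc N ^ (2 * (q * s)) = N ^ (2 : ℤ) * N ^ ((2 * r) * (-p)) := by
            rw [← zpow_add₀ hN0, ← he]
        _ = N ^ (2 : ℤ) * (N ^ (2 * r)) ^ (-p) := by rw [zpow_mul]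
        _ = N ^ (2 : ℤ) * ((-1 : ℍ[ℝ])) ^ (-p) := by rw [hY2]
        _ = N ^ (2 : ℤ) * (-1 : ℍ[ℝ]) ^ p := by
            rw [zpow_neg, ← inv_zpow]; norm_num
    have hne : ((-1 : ℍ[ℝ])) ^ p ≠ 0 :=
      zpow_ne_zero _ (neg_ne_zero.mpr one_ne_zero)
    have hN2 : N ^ (2 : ℤ) = 1 := by
      have h5 : N ^ (2 : ℤ) * (-1 : ℍ[ℝ]) ^ p = 1 * (-1 : ℍ[ℝ]) ^ p := by
        rw [one_mul]; exact hkey2.symm.trans hkey1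
      exact mul_right_cancel₀ hne h5
    have h6 : (-1 : ℍ[ℝ]) = 1 := by
      calc (-1 : ℍ[ℝ]) = N ^ (2 * r) := hY2.symm
        _ = (N ^ (2 : ℤ)) ^ r := by rw [← zpow_mul]
        _ = 1 := by rw [hN2, one_zpow]
    have h7 : (-1 : ℝ) = 1 := by simpa using congrArg QuaternionAlgebra.re h6
    linarith
  · -- uv = -1 : Y*X = X*Y, the commuting case
    have hvu : Y * X = X * Y := by
      have h3 : (X * Y) * (Y * X) = (X * Y) * (X * Y) := by rw [hcase, hu]
      exact mul_left_cancel₀ hXY0 h3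
    have c1 : Commute Y X := hvu
    have c2 : Commute Y (M ^ (-p)) := by
      rw [← hq]; exact Commute.zpow_zpow_self₀ N (-r) q
    have c3 : Commute Y (M ^ (p * r)) := by
      have h3 := c2.zpow_right₀ (-r)
      rwa [← zpow_mul, show -p * -r = p * r by ring] at h3
    have c4 : Commute Y (M ^ (q * s)) := by
      have h3 := c1.zpow_right₀ q
      rwa [hX, ← zpow_mul, show s * q = q * s by ring] at h3
    have c5 : Commute Y M := by
      have h3 := c3.mul_right c4
      rwa [← zpow_add₀ hM0, hpqrs, zpow_one] at h3
    have d1 : Commute M (N ^ q) := by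
      rw [hq]; exact Commute.zpow_right₀ (Commute.refl M) (-p)
    have d2 : Commute M (N ^ (q * s)) := by
      have h3 := d1.zpow_right₀ s
      rwa [← zpow_mul] at h3
    have d3 : Commute M (N ^ (p * r)) := by
      have h3 := c5.symm.zpow_right₀ (-p)
      rwa [hY, ← zpow_mul, show -r * -p = p * r by ring] at h3
    have h3 := d3.mul_right d2
    rwa [← zpow_add₀ hN0, hpqrs, zpow_one] at h3
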